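/- For every natural number n and all integers m, s and t, 5·∑_{j=1}^n (−F_{m−5})^{n−j}·F_m^{j−1}·G_{5(j+t)+m+s} = F_m^n·G_{5(n+t+1)+s} − (−1)^n·F_{m−5}^n·G_{5(t+1)+s}. -/

import Mathlib

/-- Any gibonacci-type sequence satisfies `A (x+m) = F m * A (x+1) + F (m-1) * A x`. -/
theorem gib_add_aux (F : ℤ → ℤ) (hF0 : F 0 = 0) (hF1 : F 1 = 1)
    (hF : ∀ k : ℤ, F (k + 2) = F (k + 1) + F k)
    (A : ℤ → ℤ) (hA : ∀ k : ℤ, A (k + 2) = A (k + 1) + A k) (x : ℤ) :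
    ∀ m : ℤ, A (x + m) = F m * A (x + 1) + F (m - 1) * A x := by
  have hFm1 : F (-1) = 1 := by
    have h := hF (-1); norm_num [hF0, hF1] at h; linarith
  have key : ∀ m : ℤ, (A (x + m) = F m * A (x + 1) + F (m - 1) * A x) ∧
      (A (x + (m + 1)) = F (m + 1) * A (x + 1) + F m * A x) := by
    intro m
    induction m using Int.induction_on with
    | zero => norm_num [hF0, hF1, hFm1]
    | succ i ih =>
      obtain ⟨h1, h2⟩ := ih
      have hAa := hA (x + i)
      have hFa := hF i
      have hFb := hF (i - 1)
      have e2 : x + ((i : ℤ) + 1) = x + i + 1 := by ring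
      have e3 : ((i : ℤ) - 1 + 2) = i + 1 := by ring
      have e4 : ((i : ℤ) - 1 + 1) = i := by ring
      rw [e2] at h2
      rw [e3, e4] at hFb
      constructor
      · rw [show ((i : ℤ) + 1 - 1) = (i : ℤ) from by ring, e2]
        exact h2
      · have e1 : x + ((i : ℤ) + 1 + 1) = x + i + 2 := by ring
        have e5 : ((i : ℤ) + 1 + 1) = i + 2 := by ring
        rw [e1, e5]
        linear_combination hAa + h1 + h2 - A (x + 1) * hFa - A x * hFb
    | pred i ih =>
      obtain ⟨h1, h2⟩ := ih
      have hAa := hA (x + (-(i : ℤ) - 1))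
      have hFa := hF (-(i : ℤ) - 1)
      have hFb := hF (-(i : ℤ) - 2)
      have e1 : x + (-(i : ℤ) - 1) + 2 = x + (-(i : ℤ) + 1) := by ring
      have e2 : x + (-(i : ℤ) - 1) + 1 = x + -(i : ℤ) := by ring
      have e3 : (-(i : ℤ) - 1 + 2) = -(i : ℤ) + 1 := by ring
      have e4 : (-(i : ℤ) - 1 + 1) = -(i : ℤ) := by ring
      have e5 : (-(i : ℤ) - 2 + 2) = -(i : ℤ) := by ring
      have e6 : (-(i : ℤ) - 2 + 1) = -(i : ℤ) - 1 := by ring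
      rw [e1, e2] at hAa
      rw [e3, e4] at hFa
      rw [e5, e6] at hFb
      constructor
      · rw [show (-(i : ℤ) - 1 - 1) = -(i : ℤ) - 2 from by ring]
        linear_combination -hAa + h2 - h1 + A (x + 1) * hFa + A x * hFb
      · rw [e4]
        exact h1
  exact fun m => (key m).1

theorem weighted_sum_gibonacci (F : ℤ → ℤ) (hF0 : F 0 = 0) (hF1 : F 1 = 1)
    (hF : ∀ k : ℤ, F (k + 2) = F (k + 1) + F k)
    (G : ℤ → ℤ) (hG : ∀ k : ℤ, G (k + 2) = G (k + 1) + G k) (n : ℕ) (m s t : ℤ) :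
    5 * ∑ j ∈ Finset.Icc 1 n,
        (-F (m - 5)) ^ (n - j) * F m ^ (j - 1) * G (5 * ((j : ℤ) + t) + m + s) =
      F m ^ n * G (5 * ((n : ℤ) + t + 1) + s) - (-1 : ℤ) ^ n * F (m - 5) ^ n * G (5 * (t + 1) + s) := by
  -- small Fibonacci values
  have h2 : F 2 = 1 := by have h := hF 0; norm_num [hF0, hF1] at h; linarith
  have h3 : F 3 = 2 := by have h := hF 1; norm_num [hF1, h2] at h; linarith
  have h4 : F 4 = 3 := by have h := hF 2; norm_num [h2, h3] at h; linarith
  have h5 : F 5 = 5 := by have h := hF 3; norm_num [h3, h4] at h; linarith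
  have hm1 : F (-1) = 1 := by have h := hF (-1); norm_num [hF0, hF1] at h; linarith
  have hm2 : F (-2) = -1 := by have h := hF (-2); norm_num [hF0, hm1] at h; linarith
  have hm3 : F (-3) = 2 := by have h := hF (-3); norm_num [hm1, hm2] at h; linarith
  have hm4 : F (-4) = -3 := by have h := hF (-4); norm_num [hm2, hm3] at h; linarith
  have hm5 : F (-5) = 5 := by have h := hF (-5); norm_num [hm3, hm4] at h; linarith
  have hm6 : F (-6) = -8 := by have h := hF (-6); norm_num [hm4, hm5] at h; linarith
  have gadd := gib_add_aux F hF0 hF1 hF G hG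
  -- key identity: 5 * G (x + m) = F m * G (x + 5) + F (m - 5) * G x
  have key : ∀ x : ℤ, 5 * G (x + m) = F m * G (x + 5) + F (m - 5) * G x := by
    intro x
    have hx5 : G (x + 5) = 5 * G (x + 1) + 3 * G x := by
      have h := gadd x 5
      rw [h5] at h
      norm_num [h4] at h
      linarith
    have hFm5 : F (m - 5) = 5 * F (m - 1) - 3 * F m := by
      have h := gib_add_aux F hF0 hF1 hF F hF m (-5)
      have e1 : m + (-5 : ℤ) = m - 5 := by ring
      have e2 : (-5 : ℤ) - 1 = -6 := by ring
      rw [e1, e2, hm5, hm6] at h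
      have h' := hF (m - 1)
      have e3 : m - 1 + 2 = m + 1 := by ring
      have e4 : m - 1 + 1 = m := by ring
      rw [e3, e4] at h'
      linarith
    have h := gadd x m
    rw [hx5, hFm5]
    linear_combination 5 * h
  -- main induction
  induction n with
  | zero =>
    simp only [Finset.Icc_self, Nat.cast_zero]
    norm_num
  | succ n ih =>
    rw [Finset.sum_Icc_succ_top (by omega : 1 ≤ n + 1)]
    have hsum : ∑ j ∈ Finset.Icc 1 n,
        (-F (m - 5)) ^ (n + 1 - j) * F m ^ (j - 1) * G (5 * ((j : ℤ) + t) + m + s)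
        = (-F (m - 5)) * ∑ j ∈ Finset.Icc 1 n,
          (-F (m - 5)) ^ (n - j) * F m ^ (j - 1) * G (5 * ((j : ℤ) + t) + m + s) := by
      rw [Finset.mul_sum]
      refine Finset.sum_congr rfl ?_
      intro j hj
      simp only [Finset.mem_Icc] at hj
      rw [show n + 1 - j = (n - j) + 1 from by omega, pow_succ]
      ring
    rw [hsum]
    have hc : 5 * G (5 * ((n : ℤ) + 1 + t) + m + s)
        = F m * G (5 * ((n : ℤ) + 1 + t + 1) + s) + F (m - 5) * G (5 * ((n : ℤ) + t + 1) + s) := by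
      have h := key (5 * ((n : ℤ) + 1 + t) + s)
      have a1 : 5 * ((n : ℤ) + 1 + t) + s + m = 5 * ((n : ℤ) + 1 + t) + m + s := by ring
      have a2 : 5 * ((n : ℤ) + 1 + t) + s + 5 = 5 * ((n : ℤ) + 1 + t + 1) + s := by ring
      have a3 : 5 * ((n : ℤ) + 1 + t) + s = 5 * ((n : ℤ) + t + 1) + s := by ring
      rw [a1, a2] at h
      rw [a3] at h
      exact h
    simp only [Nat.add_sub_cancel, Nat.sub_self, pow_zero, one_mul]
    push_cast
    push_cast at ih
    linear_combination (-F (m - 5)) * ih + (F m) ^ n * hc
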